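/- Let ⟨N, M0⟩ be a bounded marked Petri net with a basis partition π = (T_E, T_I). For every M ∈ R(N, M0), every t ∈ T_E, and all σ, σ' ∈ Σ(M,t): if φ(σ) − φ(σ') = ỹ is componentwise nonnegative and M[σ t⟩M', then there exists σ'' ∈ T_I* with φ(σ'') = ỹ such that M[σ' t σ''⟩M' (i.e., firing σ' then t then σ'' from M also reaches M'). -/

import Mathlib

open scoped BigOperators

/-- A Petri net over places `P` and transitions `T`. -/
structure PetriNet (P T : Type) where
  Pre : P → T → ℕ
  Post : P → T → ℕ

namespace PetriNet

variable {P T : Type}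

/-- Incidence matrix `C = Post − Pre` (integer valued). -/
def C (N : PetriNet P T) (p : P) (t : T) : ℤ :=
  (N.Post p t : ℤ) - (N.Pre p t : ℤ)

/-- A transition `t` is enabled at marking `M`. -/
def Enabled (N : PetriNet P T) (M : P → ℕ) (t : T) : Prop :=
  ∀ p, N.Pre p t ≤ M p

/-- `Fires N M σ M'` means the sequence `σ` is enabled at `M` and its firing
yields `M'`, i.e. `M[σ⟩M'`. -/
inductive Fires (N : PetriNet P T) : (P → ℕ) → List T → (P → ℕ) → Prop
  | nil (M : P → ℕ) : Fires N M [] M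
  | cons {M M' M'' : P → ℕ} {t : T} {σ : List T} :
      N.Enabled M t →
      (∀ p, M' p = M p + N.Post p t - N.Pre p t) →
      Fires N M' σ M'' →
      Fires N M (t :: σ) M''

/-- The reachability set `R(N, M0)`. -/
def Reach (N : PetriNet P T) (M0 : P → ℕ) : Set (P → ℕ) :=
  {M | ∃ σ : List T, N.Fires M0 σ M}

/-- Arcs of the underlying directed graph on `P ⊕ T`, where only transitions
in `TI` are kept (the `TI`-induced subnet). -/
def Arc (N : PetriNet P T) (TI : Set T) : (P ⊕ T) → (P ⊕ T) → Prop
  | Sum.inl p, Sum.inr t => t ∈ TI ∧ 0 < N.Pre p t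
  | Sum.inr t, Sum.inl p => t ∈ TI ∧ 0 < N.Post p t
  | _, _ => False

/-- The `TI`-induced subnet is acyclic: no directed cycle in its graph. -/
def AcyclicOn (N : PetriNet P T) (TI : Set T) : Prop :=
  ∀ x, ¬ Relation.TransGen (N.Arc TI) x x

/-- `(TE, TI)` is a basis partition: `TE` and `TI` partition `T` and the
`TI`-induced subnet is acyclic. -/
def IsBasisPartition (N : PetriNet P T) (TE TI : Set T) : Prop :=
  (∀ t, t ∈ TE ↔ t ∉ TI) ∧ N.AcyclicOn TI

/-- Boundedness of the marked net `⟨N, M0⟩`. -/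
def Bounded (N : PetriNet P T) (M0 : P → ℕ) : Prop :=
  ∃ k : ℕ, ∀ M ∈ N.Reach M0, ∀ p, M p ≤ k

/-- A marking is dead if no transition is enabled at it. -/
def Dead (N : PetriNet P T) (M : P → ℕ) : Prop :=
  ∀ t : T, ¬ N.Enabled M t

/-- The set `Σ(M, t)` of explanations of `t` at `M`: implicit sequences whose
firing from `M` yields a marking enabling `t`. -/
def Expl (N : PetriNet P T) (TI : Set T) (M : P → ℕ) (t : T) : Set (List T) :=
  {σ | (∀ u ∈ σ, u ∈ TI) ∧ ∃ M', N.Fires M σ M' ∧ ∀ p, N.Pre p t ≤ M' p}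

/-- The set `Σ_min(M, t)` of minimal explanations of `t` at `M`. -/
def ExplMin [DecidableEq T] (N : PetriNet P T) (TI : Set T) (M : P → ℕ) (t : T) :
    Set (List T) :=
  {σ | σ ∈ N.Expl TI M t ∧
    ¬ ∃ σ' ∈ N.Expl TI M t,
      (∀ u, σ'.count u ≤ σ.count u) ∧ ∃ u, σ'.count u ≠ σ.count u}

/-- The set `Σ_max(M, t)` of maximal explanations of `t` at `M`. -/
def ExplMax [DecidableEq T] (N : PetriNet P T) (TI : Set T) (M : P → ℕ) (t : T) :
    Set (List T) :=
  {σ | σ ∈ N.Expl TI M t ∧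
    ¬ ∃ σ' ∈ N.Expl TI M t,
      (∀ u, σ.count u ≤ σ'.count u) ∧ ∃ u, σ'.count u ≠ σ.count u}

/-- `Y_min(M, t)`: firing vectors of minimal explanations. -/
def Ymin [DecidableEq T] (N : PetriNet P T) (TI : Set T) (M : P → ℕ) (t : T) :
    Set (T → ℕ) :=
  {y | ∃ σ ∈ N.ExplMin TI M t, ∀ u, σ.count u = y u}

/-- `Y_max(M, t)`: firing vectors of maximal explanations. -/
def Ymax [DecidableEq T] (N : PetriNet P T) (TI : Set T) (M : P → ℕ) (t : T) :
    Set (T → ℕ) :=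
  {y | ∃ σ ∈ N.ExplMax TI M t, ∀ u, σ.count u = y u}

/-- The set of basis markings `M_B` (smallest set containing `M0` and closed
under minimal-explanation steps). -/
inductive Basis [DecidableEq T] [Fintype T] (N : PetriNet P T) (TE TI : Set T)
    (M0 : P → ℕ) : (P → ℕ) → Prop
  | base : Basis N TE TI M0 M0
  | step {M M' : P → ℕ} {t : T} {y : T → ℕ} :
      Basis N TE TI M0 M →
      t ∈ TE →
      y ∈ N.Ymin TI M t →
      (∀ p, (M' p : ℤ) = (M p : ℤ) + (∑ u, N.C p u * y u) + N.C p t) →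
      Basis N TE TI M0 M'

/-- The set of minimax basis markings `M_BM` (smallest set containing `M0` and
closed under minimal- or maximal-explanation steps). -/
inductive Minimax [DecidableEq T] [Fintype T] (N : PetriNet P T) (TE TI : Set T)
    (M0 : P → ℕ) : (P → ℕ) → Prop
  | base : Minimax N TE TI M0 M0
  | step {M M' : P → ℕ} {t : T} {y : T → ℕ} :
      Minimax N TE TI M0 M →
      t ∈ TE →
      (y ∈ N.Ymin TI M t ∨ y ∈ N.Ymax TI M t) →
      (∀ p, (M' p : ℤ) = (M p : ℤ) + (∑ u, N.C p u * y u) + N.C p t) →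
      Minimax N TE TI M0 M'

/-- The implicit reach `R_I(M_b)`: markings reachable from `M_b` by firing
only implicit transitions. -/
def ReachI (N : PetriNet P T) (TI : Set T) (Mb : P → ℕ) : Set (P → ℕ) :=
  {M | ∃ σ : List T, (∀ u ∈ σ, u ∈ TI) ∧ N.Fires Mb σ M}

/-- One step of the minimax-BRG: `M1 ⇒ M2`. -/
def BrgStep [DecidableEq T] [Fintype T] (N : PetriNet P T) (TE TI : Set T)
    (M1 M2 : P → ℕ) : Prop :=
  ∃ t ∈ TE, ∃ y : T → ℕ, (y ∈ N.Ymin TI M1 t ∨ y ∈ N.Ymax TI M1 t) ∧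
    ∀ p, (M2 p : ℤ) = (M1 p : ℤ) + (∑ u, N.C p u * y u) + N.C p t

/-- One step of the BRG using only minimal explanations. -/
def MinBrgStep [DecidableEq T] [Fintype T] (N : PetriNet P T) (TE TI : Set T)
    (M1 M2 : P → ℕ) : Prop :=
  ∃ t ∈ TE, ∃ y ∈ N.Ymin TI M1 t,
    ∀ p, (M2 p : ℤ) = (M1 p : ℤ) + (∑ u, N.C p u * y u) + N.C p t

/-- The minimax-BRG is unobstructed: every minimax basis marking can reach, by
BRG-steps, an i-coreachable minimax basis marking. -/
def Unobstructed [DecidableEq T] [Fintype T] (N : PetriNet P T) (TE TI : Set T)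
    (M0 : P → ℕ) (MF : Set (P → ℕ)) : Prop :=
  ∀ Mb, N.Minimax TE TI M0 Mb →
    ∃ Mb', Relation.ReflTransGen (N.BrgStep TE TI) Mb Mb' ∧
      N.Minimax TE TI M0 Mb' ∧ (N.ReachI TI Mb' ∩ MF).Nonempty

/-- `Σ_I,max(M)`: maximal implicit firing sequences at `M`. -/
def ImplMax [DecidableEq T] (N : PetriNet P T) (TI : Set T) (M : P → ℕ) :
    Set (List T) :=
  {σ | (∀ u ∈ σ, u ∈ TI) ∧ (∃ M', N.Fires M σ M') ∧
    ¬ ∃ σ' : List T, (∀ u ∈ σ', u ∈ TI) ∧ (∃ M', N.Fires M σ' M') ∧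
      (∀ u, σ.count u ≤ σ'.count u) ∧ ∃ u, σ'.count u ≠ σ.count u}

/-- `Y_I,max(M)`: firing vectors of maximal implicit firing sequences. -/
def YImax [DecidableEq T] (N : PetriNet P T) (TI : Set T) (M : P → ℕ) :
    Set (T → ℕ) :=
  {y | ∃ σ ∈ N.ImplMax TI M, ∀ u, σ.count u = y u}

end PetriNet

namespace PetriNet

variable {P T : Type}

theorem fires_concat {N : PetriNet P T} {a : List T} :
    ∀ {M Mm M' : P → ℕ} {b : List T},
      N.Fires M a Mm → N.Fires Mm b M' → N.Fires M (a ++ b) M' := by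
  induction a with
  | nil =>
    intro M Mm M' b h1 h2
    cases h1; simpa using h2
  | cons t a ih =>
    intro M Mm M' b h1 h2
    cases h1 with
    | cons he hm hf => exact .cons he hm (ih hf h2)

theorem fires_state [Fintype T] [DecidableEq T] {N : PetriNet P T} {σ : List T} :
    ∀ {M M' : P → ℕ}, N.Fires M σ M' →
      ∀ p, (M' p : ℤ) = (M p : ℤ) + ∑ u, N.C p u * (σ.count u : ℤ) := by
  induction σ with
  | nil =>
    intro M M' h p; cases h; simp
  | cons t σ ih =>
    intro M M' h p
    cases h with
    | cons he hm hf =>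
      rename_i Mi
      have h1 := ih hf p
      have hle : N.Pre p t ≤ M p + N.Post p t := le_trans (he p) (Nat.le_add_right _ _)
      have h2 : (Mi p : ℤ) = (M p : ℤ) + N.C p t := by
        rw [hm p, Nat.cast_sub hle]; push_cast [C]; ring
      have hcnt : ∀ u : T, ((t :: σ).count u : ℤ)
          = (σ.count u : ℤ) + if u = t then 1 else 0 := by
        intro u
        by_cases hu : u = t <;> simp [List.count_cons, hu] <;> exact Ne.symm hu
      have hsum : ∑ u, N.C p u * ((t :: σ).count u : ℤ)
          = (∑ u, N.C p u * (σ.count u : ℤ)) + N.C p t := by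
        calc ∑ u, N.C p u * ((t :: σ).count u : ℤ)
            = ∑ u, (N.C p u * (σ.count u : ℤ) + if u = t then N.C p u else 0) := by
              refine Finset.sum_congr rfl fun u _ => ?_
              rw [hcnt u]; by_cases hu : u = t <;> simp [hu] <;> ring
          _ = (∑ u, N.C p u * (σ.count u : ℤ)) + ∑ u, (if u = t then N.C p u else 0) := by
              rw [Finset.sum_add_distrib]
          _ = (∑ u, N.C p u * (σ.count u : ℤ)) + N.C p t := by
              simp [Finset.sum_ite_eq']
      rw [h1, h2, hsum]; ring

theorem acyclic_fire [Fintype T] [DecidableEq T] {N : PetriNet P T} {TI : Set T}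
    (hac : N.AcyclicOn TI) :
    ∀ (n : ℕ) (y : T → ℕ), (∑ u, y u) = n → (∀ u, y u ≠ 0 → u ∈ TI) →
      ∀ (M M' : P → ℕ), (∀ p, (M' p : ℤ) = (M p : ℤ) + ∑ u, N.C p u * (y u : ℤ)) →
      ∃ σ : List T, (∀ u ∈ σ, u ∈ TI) ∧ (∀ u, σ.count u = y u) ∧ N.Fires M σ M' := by
  intro n
  induction n with
  | zero =>
    intro y hsum hyTI M M' hM'
    have hy0 : ∀ u, y u = 0 := by
      intro u
      have := Finset.sum_eq_zero_iff.mp hsum u (Finset.mem_univ u)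
      exact this
    have hMM : M = M' := by
      funext p
      have := hM' p
      simp [hy0] at this
      exact_mod_cast this.symm
    exact hMM ▸ ⟨[], by simp, by simp [hy0], .nil M⟩
  | succ n ih =>
    intro y hsum hyTI M M' hM'
    -- choose a minimal transition u in the support of y
    set R : T → T → Prop := fun v u => Relation.TransGen (N.Arc TI) (Sum.inr v) (Sum.inr u)
      with hR
    haveI : IsTrans T R := ⟨fun _ _ _ hab hbc => hab.trans hbc⟩
    haveI : IsIrrefl T R := ⟨fun a h => hac _ h⟩
    have hwf : WellFounded R := Finite.wellFounded_of_trans_of_irrefl R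
    have hne : {u | y u ≠ 0}.Nonempty := by
      obtain ⟨u, _, hu⟩ := Finset.exists_ne_zero_of_sum_ne_zero
        (by omega : (∑ u, y u) ≠ 0)
      exact ⟨u, hu⟩
    obtain ⟨u, huy, hmin⟩ := hwf.has_min {u | y u ≠ 0} hne
    have huy : y u ≠ 0 := huy
    have huTI : u ∈ TI := hyTI u huy
    -- u is enabled at M
    have hen : N.Enabled M u := by
      intro p
      rcases Nat.eq_zero_or_pos (N.Pre p u) with hp | hp
      · omega
      · have key : ∀ v : T, N.C p v * (y v : ℤ) ≤ -((N.Pre p v : ℤ) * (y v : ℤ)) := by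
          intro v
          by_cases hv : y v = 0
          · simp [hv]
          · have hvTI : v ∈ TI := hyTI v hv
            have hpost : N.Post p v = 0 := by
              by_contra hpost
              have hpost' : 0 < N.Post p v := Nat.pos_of_ne_zero hpost
              have harc1 : N.Arc TI (Sum.inr v) (Sum.inl p) := ⟨hvTI, hpost'⟩
              have harc2 : N.Arc TI (Sum.inl p) (Sum.inr u) := ⟨huTI, hp⟩
              exact hmin v hv (Relation.TransGen.head harc1 (Relation.TransGen.single harc2))
            simp [C, hpost]
        have hsum_le : ∑ v, N.C p v * (y v : ℤ) ≤ -((N.Pre p u : ℤ) * (y u : ℤ)) := by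
          have h1 : ∑ v, N.C p v * (y v : ℤ) ≤ ∑ v, -((N.Pre p v : ℤ) * (y v : ℤ)) :=
            Finset.sum_le_sum fun v _ => key v
          have h2 : (N.Pre p u : ℤ) * (y u : ℤ) ≤ ∑ v, (N.Pre p v : ℤ) * (y v : ℤ) :=
            Finset.single_le_sum (f := fun v => (N.Pre p v : ℤ) * (y v : ℤ))
              (fun i _ => by positivity) (Finset.mem_univ u)
          have h3 : ∑ v, -((N.Pre p v : ℤ) * (y v : ℤ))
              = -(∑ v, (N.Pre p v : ℤ) * (y v : ℤ)) := by
            simp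
          omega
        have h0 : (0 : ℤ) ≤ (M' p : ℤ) := Int.ofNat_nonneg _
        have heq := hM' p
        have hyu1 : (1 : ℤ) ≤ (y u : ℤ) := by exact_mod_cast Nat.one_le_iff_ne_zero.mpr huy
        have hmul : (N.Pre p u : ℤ) * 1 ≤ (N.Pre p u : ℤ) * (y u : ℤ) :=
          mul_le_mul_of_nonneg_left hyu1 (by positivity)
        have : (N.Pre p u : ℤ) ≤ (M p : ℤ) := by linarith
        exact_mod_cast this
    set M1 : P → ℕ := fun p => M p + N.Post p u - N.Pre p u with hM1def
    have hM1 : ∀ p, (M1 p : ℤ) = (M p : ℤ) + N.C p u := by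
      intro p
      have hle : N.Pre p u ≤ M p + N.Post p u := le_trans (hen p) (Nat.le_add_right _ _)
      rw [hM1def]; simp only []
      rw [Nat.cast_sub hle]; push_cast [C]; ring
    set y' : T → ℕ := fun v => if v = u then y u - 1 else y v with hy'def
    have hpt : ∀ v, y v = y' v + if v = u then 1 else 0 := by
      intro v
      by_cases hv : v = u
      · subst hv; simp [hy'def]; omega
      · simp [hy'def, hv]
    have hsum' : (∑ v, y' v) = n := by
      have : (∑ v, y v) = (∑ v, y' v) + ∑ v, (if v = u then 1 else 0) := by
        rw [← Finset.sum_add_distrib]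
        exact Finset.sum_congr rfl fun v _ => hpt v
      simp [Finset.sum_ite_eq'] at this
      omega
    have hyTI' : ∀ v, y' v ≠ 0 → v ∈ TI := by
      intro v hv
      by_cases h : v = u
      · subst h; exact huTI
      · exact hyTI v (by simpa [hy'def, h] using hv)
    have hstate : ∀ p, (M' p : ℤ) = (M1 p : ℤ) + ∑ v, N.C p v * (y' v : ℤ) := by
      intro p
      have hsplit : ∑ v, N.C p v * (y v : ℤ)
          = (∑ v, N.C p v * (y' v : ℤ)) + N.C p u := by
        calc ∑ v, N.C p v * (y v : ℤ)
            = ∑ v, (N.C p v * (y' v : ℤ) + if v = u then N.C p v else 0) := by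
              refine Finset.sum_congr rfl fun v _ => ?_
              have := hpt v
              by_cases hv : v = u
              · subst hv; rw [this]; push_cast; simp; ring
              · rw [this]; simp [hv]
          _ = (∑ v, N.C p v * (y' v : ℤ)) + ∑ v, (if v = u then N.C p v else 0) := by
              rw [Finset.sum_add_distrib]
          _ = (∑ v, N.C p v * (y' v : ℤ)) + N.C p u := by
              simp [Finset.sum_ite_eq']
      rw [hM' p, hsplit, hM1 p]; ring
    obtain ⟨σ₀, hσTI, hσcnt, hσf⟩ := ih y' hsum' hyTI' M1 M' hstate
    refine ⟨u :: σ₀, ?_, ?_, ?_⟩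
    · intro v hv
      rcases List.mem_cons.mp hv with h | h
      · subst h; exact huTI
      · exact hσTI v h
    · intro v
      by_cases hv : v = u
      · rw [hv]
        have h1 : (u :: σ₀).count u = σ₀.count u + 1 := by simp
        rw [h1, hσcnt u]
        have h2 : y' u = y u - 1 := by simp [hy'def]
        omega
      · have : (u :: σ₀).count v = σ₀.count v := by simp [List.count_cons, hv, Ne.symm hv]
        rw [this, hσcnt v]
        simp [hy'def, hv]
    · exact .cons hen (fun p => rfl) hσf

end PetriNet

open PetriNet in
/-- If `σ, σ' ∈ Σ(M,t)` with `φ(σ) − φ(σ') = ỹ ≥ 0` and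
`M[σ t⟩M'`, then there is `σ'' ∈ T_I*` with `φ(σ'') = ỹ` and
`M[σ' t σ''⟩M'`. -/
theorem statement6 {P T : Type} [Fintype T] [DecidableEq T]
    (N : PetriNet P T) (M0 : P → ℕ) (TE TI : Set T)
    (hbp : N.IsBasisPartition TE TI) (hbnd : N.Bounded M0)
    (M : P → ℕ) (hM : M ∈ N.Reach M0)
    (t : T) (ht : t ∈ TE)
    (σ σ' : List T) (hσ : σ ∈ N.Expl TI M t) (hσ' : σ' ∈ N.Expl TI M t)
    (hge : ∀ u, σ'.count u ≤ σ.count u)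
    (M' : P → ℕ) (hfire : N.Fires M (σ ++ [t]) M') :
    ∃ σ'' : List T, (∀ u ∈ σ'', u ∈ TI) ∧
      (∀ u, σ''.count u = σ.count u - σ'.count u) ∧
      N.Fires M (σ' ++ [t] ++ σ'') M' := by
  obtain ⟨hσTI, _⟩ := hσ
  obtain ⟨hσ'TI, M1, hf1, hen1⟩ := hσ'
  set M2 : P → ℕ := fun p => M1 p + N.Post p t - N.Pre p t with hM2def
  have hft : N.Fires M1 [t] M2 := .cons hen1 (fun p => rfl) (.nil M2)
  have hM2 : ∀ p, (M2 p : ℤ) = (M1 p : ℤ) + N.C p t := by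
    intro p
    have hle : N.Pre p t ≤ M1 p + N.Post p t := le_trans (hen1 p) (Nat.le_add_right _ _)
    rw [hM2def]; simp only []
    rw [Nat.cast_sub hle]; push_cast [PetriNet.C]; ring
  set y : T → ℕ := fun u => σ.count u - σ'.count u with hydef
  have hycast : ∀ u, (y u : ℤ) = (σ.count u : ℤ) - (σ'.count u : ℤ) := by
    intro u
    rw [hydef]; simp only []
    rw [Nat.cast_sub (hge u)]
  have hyTI : ∀ u, y u ≠ 0 → u ∈ TI := by
    intro u hu
    have : σ'.count u < σ.count u := by
      have := hge u
      rw [hydef] at hu; simp only [] at hu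
      omega
    have : 0 < σ.count u := by omega
    exact hσTI u (List.count_pos_iff.mp this)
  -- state equation for M' from firing σ ++ [t] at M
  have hM'eq := fires_state hfire
  have htcnt : ∀ p, ∑ u, N.C p u * (((σ ++ [t]).count u : ℕ) : ℤ)
      = (∑ u, N.C p u * (σ.count u : ℤ)) + N.C p t := by
    intro p
    calc ∑ u, N.C p u * (((σ ++ [t]).count u : ℕ) : ℤ)
        = ∑ u, (N.C p u * (σ.count u : ℤ) + if u = t then N.C p u else 0) := by
          refine Finset.sum_congr rfl fun u _ => ?_
          have : (σ ++ [t]).count u = σ.count u + if u = t then 1 else 0 := by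
            by_cases hu : u = t <;> simp [hu] <;> exact List.count_eq_zero.mpr (by simpa using hu)
          rw [this]
          by_cases hu : u = t <;> simp [hu] <;> push_cast <;> ring
      _ = (∑ u, N.C p u * (σ.count u : ℤ)) + ∑ u, (if u = t then N.C p u else 0) := by
          rw [Finset.sum_add_distrib]
      _ = _ := by simp [Finset.sum_ite_eq']
  have hM1eq := fires_state hf1
  have hstate : ∀ p, (M' p : ℤ) = (M2 p : ℤ) + ∑ u, N.C p u * (y u : ℤ) := by
    intro p
    have h1 : (M' p : ℤ) = (M p : ℤ) + (∑ u, N.C p u * (σ.count u : ℤ)) + N.C p t := by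
      rw [hM'eq p, htcnt p]; ring
    have h2 : (M2 p : ℤ) = (M p : ℤ) + (∑ u, N.C p u * (σ'.count u : ℤ)) + N.C p t := by
      rw [hM2 p, hM1eq p]
    have h3 : ∑ u, N.C p u * (y u : ℤ)
        = (∑ u, N.C p u * (σ.count u : ℤ)) - ∑ u, N.C p u * (σ'.count u : ℤ) := by
      rw [← Finset.sum_sub_distrib]
      refine Finset.sum_congr rfl fun u _ => ?_
      rw [hycast u]; ring
    linarith [h1, h2, h3]
  obtain ⟨σ'', hTI'', hcnt'', hf''⟩ :=
    acyclic_fire hbp.2 (∑ u, y u) y rfl hyTI M2 M' hstate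
  refine ⟨σ'', hTI'', fun u => by rw [hcnt'' u], ?_⟩
  exact fires_concat (fires_concat hf1 hft) hf''
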